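/- For natural numbers n, m, l with 1 ≤ l, 1 ≤ m ≤ n, the binomial coefficients satisfy binom(n,m) / binom(l·n, l·m) ≤ (m/n)^{(l−1)·m}. -/

import Mathlib

lemma aux_pow_le_choose : ∀ (m n : ℕ), m ≤ n → n ^ m ≤ m ^ m * n.choose m := by
  intro m
  induction m with
  | zero => intro n _; simp
  | succ m ih =>
    intro n hn
    obtain ⟨n', rfl⟩ : ∃ n', n = n' + 1 := ⟨n - 1, by omega⟩
    have hmn' : m ≤ n' := by omega
    have key : (n' + 1) ^ m ≤ (m + 1) ^ m * n'.choose m := by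
      rcases Nat.eq_zero_or_pos m with h0 | hpos
      · subst h0; simp
      · have h1 : ((n' + 1) * m) ^ m ≤ ((m + 1) * n') ^ m := by
          apply Nat.pow_le_pow_left; nlinarith
        have h2 : m ^ m * (n' + 1) ^ m ≤ (m + 1) ^ m * n' ^ m := by
          calc m ^ m * (n' + 1) ^ m = ((n' + 1) * m) ^ m := by
                rw [← mul_pow, mul_comm]
            _ ≤ ((m + 1) * n') ^ m := h1
            _ = (m + 1) ^ m * n' ^ m := mul_pow _ _ _
        have h3 : m ^ m * (n' + 1) ^ m ≤ m ^ m * ((m + 1) ^ m * n'.choose m) := by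
          calc m ^ m * (n' + 1) ^ m ≤ (m + 1) ^ m * n' ^ m := h2
            _ ≤ (m + 1) ^ m * (m ^ m * n'.choose m) :=
              Nat.mul_le_mul_left _ (ih n' hmn')
            _ = m ^ m * ((m + 1) ^ m * n'.choose m) := by ring
        exact Nat.le_of_mul_le_mul_left h3 (Nat.pow_pos hpos)
    calc (n' + 1) ^ (m + 1) = (n' + 1) * (n' + 1) ^ m := by ring
      _ ≤ (n' + 1) * ((m + 1) ^ m * n'.choose m) := Nat.mul_le_mul_left _ key
      _ = (m + 1) ^ m * ((n' + 1) * n'.choose m) := by ring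
      _ = (m + 1) ^ m * ((n' + 1).choose (m + 1) * (m + 1)) := by
          rw [Nat.add_one_mul_choose_eq]
      _ = (m + 1) ^ (m + 1) * (n' + 1).choose (m + 1) := by ring

lemma aux_choose_mul_le (a b c d : ℕ) :
    a.choose c * b.choose d ≤ (a + b).choose (c + d) := by
  rw [Nat.add_choose_eq]
  exact Finset.single_le_sum (f := fun ij : ℕ × ℕ => a.choose ij.1 * b.choose ij.2)
    (fun i _ => Nat.zero_le _) (show (c, d) ∈ Finset.HasAntidiagonal.antidiagonal (c + d) from Finset.HasAntidiagonal.mem_antidiagonal.2 rfl)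

theorem stmt5 {n m l : ℕ} (hl : 1 ≤ l) (hm : 1 ≤ m) (hmn : m ≤ n) :
    (n.choose m : ℝ) / ((l * n).choose (l * m) : ℝ) ≤ ((m : ℝ) / n) ^ ((l - 1) * m) := by
  obtain ⟨l', rfl⟩ : ∃ l', l = l' + 1 := ⟨l - 1, by omega⟩
  have hn : 1 ≤ n := le_trans hm hmn
  simp only [Nat.add_sub_cancel]
  have hA : 0 < n.choose m := Nat.choose_pos hmn
  have hB : 0 < (l' * n).choose (l' * m) := Nat.choose_pos (Nat.mul_le_mul_left _ hmn)
  have hC : 0 < ((l' + 1) * n).choose ((l' + 1) * m) :=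
    Nat.choose_pos (Nat.mul_le_mul_left _ hmn)
  have hV : n.choose m * (l' * n).choose (l' * m) ≤ ((l' + 1) * n).choose ((l' + 1) * m) := by
    have := aux_choose_mul_le n (l' * n) m (l' * m)
    have e1 : n + l' * n = (l' + 1) * n := by ring
    have e2 : m + l' * m = (l' + 1) * m := by ring
    rwa [e1, e2] at this
  set k := l' * m with hk
  have hmpos : (0 : ℝ) < (m : ℝ) := by exact_mod_cast hm
  have hnpos : (0 : ℝ) < (n : ℝ) := by exact_mod_cast hn
  have hBk : ((n : ℝ) / m) ^ k ≤ ((l' * n).choose (l' * m) : ℝ) := by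
    rcases Nat.eq_zero_or_pos l' with h0 | hl1
    · subst h0; simp [hk]
    · have hnat := aux_pow_le_choose (l' * m) (l' * n) (Nat.mul_le_mul_left _ hmn)
      have hreal : ((l' : ℝ) * n) ^ k ≤ ((l' : ℝ) * m) ^ k *
          ((l' * n).choose (l' * m) : ℝ) := by exact_mod_cast hnat
      have hl1pos : (0 : ℝ) < (l' : ℝ) := by exact_mod_cast hl1
      rw [div_pow, div_le_iff₀ (by positivity)]
      have h1 : (l' : ℝ) ^ k * ((n : ℝ) ^ k) ≤ (l' : ℝ) ^ k *
          (((l' * n).choose (l' * m) : ℝ) * (m : ℝ) ^ k) := by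
        calc (l' : ℝ) ^ k * (n : ℝ) ^ k = ((l' : ℝ) * n) ^ k := (mul_pow _ _ _).symm
          _ ≤ ((l' : ℝ) * m) ^ k * ((l' * n).choose (l' * m) : ℝ) := hreal
          _ = (l' : ℝ) ^ k * (((l' * n).choose (l' * m) : ℝ) * (m : ℝ) ^ k) := by ring
      exact le_of_mul_le_mul_left h1 (by positivity)
  have hBpos : (0 : ℝ) < ((l' * n).choose (l' * m) : ℝ) := by exact_mod_cast hB
  have hApos : (0 : ℝ) < (n.choose m : ℝ) := by exact_mod_cast hA
  have hVr : (n.choose m : ℝ) * ((l' * n).choose (l' * m) : ℝ) ≤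
      (((l' + 1) * n).choose ((l' + 1) * m) : ℝ) := by exact_mod_cast hV
  calc (n.choose m : ℝ) / (((l' + 1) * n).choose ((l' + 1) * m) : ℝ)
      ≤ (n.choose m : ℝ) / ((n.choose m : ℝ) * ((l' * n).choose (l' * m) : ℝ)) := by
        gcongr
    _ = 1 / ((l' * n).choose (l' * m) : ℝ) := by
        rw [one_div, div_eq_iff (by positivity)]
        field_simp
    _ ≤ ((m : ℝ) / n) ^ k := by
        rw [div_le_iff₀ hBpos]
        calc (1 : ℝ) = ((m : ℝ) / n) ^ k * ((n : ℝ) / m) ^ k := by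
              rw [← mul_pow]; field_simp; simp
          _ ≤ ((m : ℝ) / n) ^ k * ((l' * n).choose (l' * m) : ℝ) := by
              gcongr
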